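/- Let p > q > 0 be coprime integers and suppose the integer list [b1, ..., b_{k-1}, bk] with all bi ≥ 2 satisfies hj([b1,...,bk]) = p^2/(p*q - 1). Then the list [2, b1, ..., b_{k-1}, bk + 1] (a 2 prepended and the last entry increased by 1) satisfies hj([2, b1, ..., bk+1]) = (2p - q)^2/((2p - q)*p - 1), and moreover gcd(2p - q, p) = 1 with 2p - q > p > 0. -/

import Mathlib

def hj : List ℤ → ℚ
  | [] => 0
  | b :: l => (b : ℚ) - 1 / hj l

def hjmat : List ℤ → ℤ × ℤ × ℤ × ℤ
  | [] => (1, 0, 0, 1)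
  | x :: l =>
    (x * (hjmat l).1 - (hjmat l).2.2.1, x * (hjmat l).2.1 - (hjmat l).2.2.2,
     (hjmat l).1, (hjmat l).2.1)

lemma hjmat_inv (l : List ℤ) (h : ∀ x ∈ l, 2 ≤ x) :
    0 ≤ (hjmat l).2.2.1 ∧ (hjmat l).2.2.1 < (hjmat l).1 ∧
    (hjmat l).1 * (hjmat l).2.2.2 - (hjmat l).2.1 * (hjmat l).2.2.1 = 1 ∧
    ∀ x : ℤ, 1 ≤ x → (1 ≤ (hjmat l).2.2.1 * x + (hjmat l).2.2.2 ∧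
      (hjmat l).2.2.1 * x + (hjmat l).2.2.2 ≤ (hjmat l).1 * x + (hjmat l).2.1 ∧
      (2 ≤ x → (hjmat l).2.2.1 * x + (hjmat l).2.2.2 < (hjmat l).1 * x + (hjmat l).2.1)) := by
  induction l with
  | nil => simp [hjmat]; intro x hx; omega
  | cons y l ih =>
    obtain ⟨hc0, hca, hdet, hx⟩ := ih (fun x hx => h x (List.mem_cons_of_mem _ hx))
    have hy : 2 ≤ y := h y (List.mem_cons_self)
    simp only [hjmat]
    refine ⟨by omega, ?_, by linarith [hdet], ?_⟩
    · nlinarith [hx 2 (by norm_num)]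
    · intro x hx1
      obtain ⟨h1, h2, h3⟩ := hx x hx1
      refine ⟨by omega, ?_, ?_⟩
      · nlinarith
      · intro hx2
        have := h3 hx2
        nlinarith

lemma hj_append (l : List ℤ) (h : ∀ x ∈ l, 2 ≤ x) (x : ℤ) (hx : 2 ≤ x) :
    hj (l ++ [x]) = (((hjmat l).1 * x + (hjmat l).2.1 : ℤ) : ℚ) /
      (((hjmat l).2.2.1 * x + (hjmat l).2.2.2 : ℤ) : ℚ) := by
  induction l with
  | nil => simp [hj, hjmat]
  | cons y l ih =>
    have hl : ∀ z ∈ l, 2 ≤ z := fun z hz => h z (List.mem_cons_of_mem _ hz)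
    obtain ⟨hc0, hca, hdet, hinv⟩ := hjmat_inv l hl
    obtain ⟨h1, h2, h3⟩ := hinv x (by omega)
    have hnum : (0 : ℤ) < (hjmat l).1 * x + (hjmat l).2.1 := by
      have := h3 hx; omega
    have hnumQ : (((hjmat l).1 * x + (hjmat l).2.1 : ℤ) : ℚ) ≠ 0 := by
      exact_mod_cast hnum.ne'
    have : hj ((y :: l) ++ [x]) = (y : ℚ) - 1 / hj (l ++ [x]) := rfl
    rw [this, ih hl]
    simp only [hjmat]
    push_cast at hnumQ ⊢
    field_simp
    ring

lemma key (p q a e c d b : ℤ) (hq : 1 ≤ q) (hpq : q < p)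
    (hb : 2 ≤ b) (hdet : a*d - e*c = 1) (hc0 : 0 ≤ c) (hca : c < a)
    (h1 : 1 ≤ c*b+d) (hae : c*1+d ≤ a*1+e) (hcd1 : 1 ≤ c*1+d)
    (hcross : (a*b+e)*(p*q-1) = p^2*(c*b+d)) :
    a = p^2 - p*q - 1 ∧ c = p*q - q^2 - 1 ∧ a*b+e = p^2 ∧ c*b+d = p*q-1 := by
  have hp2 : 2 ≤ p := by omega
  have hpq1 : 1 ≤ p*q - 1 := by nlinarith
  have hm : (c*b+d) * (a*(p*q-1) - c*p^2) = p*q - 1 := by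
    linear_combination c*hcross + (p*q-1)*hdet
  have hk : (p*q-1) * (q^2*(a*b+e) - (p*q+1)*(c*b+d)) = c*b+d := by
    linear_combination q^2*hcross
  set m := a*(p*q-1) - c*p^2 with hmdef
  set k := q^2*(a*b+e) - (p*q+1)*(c*b+d) with hkdef
  have hmk : (c*b+d) * (m*k) = (c*b+d) * 1 := by
    calc (c*b+d) * (m*k) = ((c*b+d)*m)*k := by ring
    _ = (p*q-1)*k := by rw [hm]
    _ = c*b+d := hk
    _ = (c*b+d)*1 := by ring
  have hmk1 : m * k = 1 := by
    have hne : (c*b+d) ≠ 0 := by omega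
    exact mul_left_cancel₀ hne hmk
  have hm1 : m = 1 := by
    have := Int.isUnit_iff.mp (IsUnit.of_mul_eq_one (a := m) k hmk1)
    rcases this with h | h
    · exact h
    · exfalso; rw [h] at hm; linarith
  have hcb : c*b+d = p*q-1 := by rw [hm1] at hm; linarith
  have hab : a*b+e = p^2 := by
    have hne : (p*q-1) ≠ 0 := by omega
    have : (a*b+e)*(p*q-1) = p^2*(p*q-1) := by rw [hcross, hcb]
    exact mul_right_cancel₀ hne this
  have hdet2 : a*(p*q-1) - c*p^2 = 1 := hm1
  clear hmk hmk1 hm hk hm1 hmdef hkdef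
  clear_value m k
  clear m k
  -- bounds on a
  have ha1 : 1 ≤ a := by omega
  have hae1 : 1 ≤ a + e := by linarith
  have haub : a + 1 ≤ p^2 := by
    nlinarith [mul_nonneg (show (0:ℤ) ≤ a by omega) (show (0:ℤ) ≤ b - 2 by omega)]
  -- divisibility
  have hdvdmul : (p^2 : ℤ) ∣ (a - (p^2 - p*q - 1))*(p*q-1) := by
    refine ⟨c - (p*q - q^2 - 1), ?_⟩
    linear_combination hdet2
  have hcop2 : IsCoprime (p^2) (p*q-1) := ⟨q^2, -(p*q+1), by ring⟩
  have hdvd : (p^2 : ℤ) ∣ (a - (p^2 - p*q - 1)) := hcop2.dvd_of_dvd_mul_right hdvdmul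
  have ht1 : 1 ≤ p^2 - p*q - 1 := by nlinarith
  have ht2 : p^2 - p*q - 1 ≤ p^2 - 1 := by nlinarith
  have ha : a = p^2 - p*q - 1 := by
    obtain ⟨t, ht⟩ := hdvd
    have hp2pos : (0:ℤ) < p^2 := by positivity
    rcases lt_trichotomy t 0 with h | h | h
    · have h' : p^2 * t ≤ p^2 * (-1) := by
        apply mul_le_mul_of_nonneg_left (by omega) (le_of_lt hp2pos)
      linarith
    · rw [h, mul_zero] at ht; omega
    · have h' : p^2 * 1 ≤ p^2 * t := by
        apply mul_le_mul_of_nonneg_left (by omega) (le_of_lt hp2pos)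
      linarith
  refine ⟨ha, ?_, hab, hcb⟩
  have hp2ne : (p^2 : ℤ) ≠ 0 := by positivity
  have : c * p^2 = (p*q - q^2 - 1) * p^2 := by
    rw [ha] at hdet2; linear_combination -hdet2
  exact mul_right_cancel₀ hp2ne this

/-- Operation (b) on HJ expansions of `p²/(pq-1)`. -/
theorem hj_op_b (p q : ℤ) (hq : 0 < q) (hpq : q < p) (hcop : IsCoprime p q)
    (l : List ℤ) (b : ℤ) (hall : ∀ x ∈ l ++ [b], 2 ≤ x)
    (hhj : hj (l ++ [b]) = (p : ℚ) ^ 2 / (p * q - 1)) :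
    hj (2 :: (l ++ [b + 1])) = ((2 * p - q : ℤ) : ℚ) ^ 2 / ((2 * p - q) * p - 1) ∧
      IsCoprime (2 * p - q) p ∧ p < 2 * p - q ∧ 0 < p := by
  have hl : ∀ x ∈ l, 2 ≤ x := fun x hx => hall x (List.mem_append_left _ hx)
  have hb : 2 ≤ b := hall b (List.mem_append_right _ (List.mem_singleton_self _))
  have hp2 : 2 ≤ p := by omega
  obtain ⟨hc0, hca, hdet, hinv⟩ := hjmat_inv l hl
  set a := (hjmat l).1 with hadef
  set e := (hjmat l).2.1 with hedef
  set c := (hjmat l).2.2.1 with hcdef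
  set d := (hjmat l).2.2.2 with hddef
  obtain ⟨hb1, hb2, hb3⟩ := hinv b (by omega)
  obtain ⟨h11, h12, _⟩ := hinv 1 le_rfl
  rw [hj_append l hl b hb] at hhj
  have hpq1 : (1:ℤ) ≤ p*q - 1 := by nlinarith
  have hcbne : ((c*b+d : ℤ) : ℚ) ≠ 0 := by exact_mod_cast (by omega : (c*b+d : ℤ) ≠ 0)
  have hpqne : ((p*q-1 : ℤ) : ℚ) ≠ 0 := by exact_mod_cast (by omega : (p*q-1 : ℤ) ≠ 0)
  have hcross : (a*b+e)*(p*q-1) = p^2*(c*b+d) := by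
    push_cast at hpqne
    rw [div_eq_div_iff hcbne hpqne] at hhj
    exact_mod_cast hhj
  obtain ⟨ha, hc, hab, hcb⟩ := key p q a e c d b (by omega) hpq hb hdet hc0 hca hb1 h12 h11 hcross
  refine ⟨?_, ?_, by omega, by omega⟩
  · have hstep : hj (2 :: (l ++ [b + 1])) = (2 : ℚ) - 1 / hj (l ++ [b + 1]) := by
      simp [hj]
    rw [hstep, hj_append l hl (b+1) (by omega)]
    have hN : a*(b+1)+e = 2*p^2 - p*q - 1 := by linear_combination hab + ha
    have hD : c*(b+1)+d = 2*p*q - q^2 - 2 := by linear_combination hcb + hc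
    rw [hN, hD]
    have hNpos : (1:ℤ) ≤ 2*p^2 - p*q - 1 := by nlinarith
    have hNne : ((2*p^2 - p*q - 1 : ℤ) : ℚ) ≠ 0 := by
      exact_mod_cast (by omega : (2*p^2 - p*q - 1 : ℤ) ≠ 0)
    have hN2ne : ((2*p - q : ℚ) * p - 1) ≠ 0 := by
      have : ((2*p - q : ℤ) : ℚ) * (p:ℤ) - 1 = ((2*p^2 - p*q - 1 : ℤ) : ℚ) := by push_cast; ring
      push_cast at this ⊢
      rw [this]; have h := hNne; push_cast at h; exact h
    push_cast at hNne hN2ne ⊢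
    field_simp
    have hX : ((p:ℚ) * (2 * p - q) - 1) ≠ 0 := by rw [mul_comm]; exact hN2ne
    rw [eq_div_iff hX, sub_mul, div_mul_cancel₀ _ hX]
    ring
  · obtain ⟨u, v, huv⟩ := hcop
    exact ⟨-v, u + 2*v, by linear_combination huv⟩
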